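/- The function D(z) = r(-z)² - z·r(-z), where r(t) = φ(t)/Φ(t) is the standard normal inverse Mills ratio, is strictly increasing in z. -/

import Mathlib

open Real Set MeasureTheory intervalIntegral Filter
open scoped Convolution

noncomputable def phi (t : ℝ) : ℝ := (Real.sqrt (2 * Real.pi))⁻¹ * Real.exp (-t ^ 2 / 2)

noncomputable def Phi (t : ℝ) : ℝ := ∫ u in Set.Iic t, phi u

lemma phi_pos (t : ℝ) : 0 < phi t := by
  apply mul_pos (inv_pos.mpr (Real.sqrt_pos.mpr (by positivity))) (Real.exp_pos _)

lemma phi_even (t : ℝ) : phi (-t) = phi t := by simp [phi]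

lemma continuous_phi : Continuous phi := by
  unfold phi; fun_prop

lemma integrable_phi : Integrable phi := by
  have h : Integrable (fun t : ℝ => Real.exp (-(2⁻¹ : ℝ) * t ^ 2)) := integrable_exp_neg_mul_sq (by norm_num)
  have : phi = fun t => (Real.sqrt (2 * Real.pi))⁻¹ * Real.exp (-(2⁻¹:ℝ) * t ^ 2) := by
    funext t; unfold phi; ring_nf
  rw [this]
  exact h.const_mul _

lemma hasDerivAt_phi (t : ℝ) : HasDerivAt phi (-t * phi t) t := by
  have h1 : HasDerivAt (fun t : ℝ => -t ^ 2 / 2) (-t) t := by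
    have := ((hasDerivAt_pow 2 t).neg).div_const 2
    refine this.congr_deriv ?_
    simp; ring
  have := (h1.exp).const_mul (Real.sqrt (2 * Real.pi))⁻¹
  refine this.congr_deriv ?_
  unfold phi; ring

lemma hasDerivAt_Phi (t : ℝ) : HasDerivAt Phi (phi t) t := by
  have key : ∀ s : ℝ, Phi s = Phi 0 + ∫ u in (0:ℝ)..s, phi u := by
    intro s
    have := intervalIntegral.integral_Iic_sub_Iic (integrable_phi.integrableOn (s := Iic (0:ℝ)))
      (integrable_phi.integrableOn (s := Iic s))
    unfold Phi
    linarith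
  have h2 : HasDerivAt (fun s => ∫ u in (0:ℝ)..s, phi u) (phi t) t :=
    intervalIntegral.integral_hasDerivAt_right integrable_phi.intervalIntegrable
      (continuous_phi.stronglyMeasurableAtFilter _ _) continuous_phi.continuousAt
  have := (h2.const_add (Phi 0))
  apply this.congr_of_eventuallyEq
  filter_upwards with s using key s

lemma Phi_pos (t : ℝ) : 0 < Phi t := by
  unfold Phi
  apply (setIntegral_pos_iff_support_of_nonneg_ae ?_ ?_).2
  · have : (Function.support phi) = univ := by
      ext x; simp [Function.support, (phi_pos x).ne']
    rw [this, univ_inter, Real.volume_Iic]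
    simp
  · filter_upwards with x using (phi_pos x).le
  · exact integrable_phi.integrableOn

noncomputable def w (z t : ℝ) : ℝ := Real.exp (-(z*t) - t^2/2)

noncomputable def M0 (z : ℝ) : ℝ := ∫ t in Ioi (0:ℝ), w z t

noncomputable def M1 (z : ℝ) : ℝ := ∫ t in Ioi (0:ℝ), t * w z t

lemma w_pos (z t : ℝ) : 0 < w z t := Real.exp_pos _

lemma w_eq (z t : ℝ) : w z t = Real.exp (z^2/2) * Real.exp (-(2⁻¹:ℝ) * (t + z)^2) := by
  rw [w, ← Real.exp_add]; congr 1; ring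

lemma continuous_w (z : ℝ) : Continuous (w z) := by unfold w; fun_prop

lemma integrable_w (z : ℝ) : Integrable (w z) := by
  have h : Integrable (fun t : ℝ => Real.exp (-(2⁻¹ : ℝ) * t ^ 2)) := integrable_exp_neg_mul_sq (by norm_num)
  have h2 := (h.comp_add_right z).const_mul (Real.exp (z^2/2))
  refine h2.congr (Filter.Eventually.of_forall fun t => ?_)
  rw [w_eq]

lemma integrable_tw (z : ℝ) : Integrable (fun t => t * w z t) := by
  have h : Integrable (fun t : ℝ => t * Real.exp (-(2⁻¹ : ℝ) * t ^ 2)) := integrable_mul_exp_neg_mul_sq (by norm_num)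
  have h2 := ((h.comp_add_right z).const_mul (Real.exp (z^2/2))).sub ((integrable_w z).const_mul z)
  refine h2.congr (Filter.Eventually.of_forall fun t => ?_)
  simp only [Pi.sub_apply]
  rw [w_eq]
  ring

lemma M0_pos (z : ℝ) : 0 < M0 z := by
  rw [M0]
  apply (setIntegral_pos_iff_support_of_nonneg_ae ?_ ?_).2
  · have : (Function.support (w z)) = univ := by
      ext x; simp [Function.support, (w_pos z x).ne']
    rw [this, univ_inter, Real.volume_Ioi]
    simp
  · filter_upwards with x using (w_pos z x).le
  · exact (integrable_w z).integrableOn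

lemma setIntegral_Ioi_comp_add (f : ℝ → ℝ) (z : ℝ) :
    ∫ x in Ioi (0:ℝ), f (x + z) = ∫ x in Ioi z, f x := by
  have A : MeasurableEmbedding (fun x : ℝ => x + z) :=
    (Homeomorph.addRight z).isClosedEmbedding.measurableEmbedding
  have h := MeasurableEmbedding.setIntegral_map (μ := volume) A f (Ioi z)
  rw [map_add_right_eq_self] at h
  rw [h]
  congr 1
  ext x
  simp [lt_add_iff_pos_left]

lemma Phi_neg (z : ℝ) : Phi (-z) = phi z * M0 z := by
  have h1 : Phi (-z) = ∫ x in Ioi z, phi x := by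
    have h := integral_comp_neg_Iic (-z) phi
    rw [neg_neg] at h
    rw [Phi, ← h]
    exact setIntegral_congr_fun measurableSet_Iic fun x _ => (phi_even x).symm
  have h2 : ∫ x in Ioi z, phi x = ∫ x in Ioi (0:ℝ), phi (x + z) :=
    (setIntegral_Ioi_comp_add phi z).symm
  rw [h1, h2, M0, ← MeasureTheory.integral_const_mul]
  refine setIntegral_congr_fun measurableSet_Ioi fun x _ => ?_
  rw [phi, phi, w, mul_assoc, ← Real.exp_add]
  congr 2
  ring

lemma M_identity (z : ℝ) : z * M0 z + M1 z = 1 := by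
  have hderiv : ∀ t : ℝ, HasDerivAt (fun t => -(w z t)) ((z + t) * w z t) t := by
    intro t
    have h1 : HasDerivAt (fun t : ℝ => -(z*t) - t^2/2) (-z - t) t := by
      have := ((hasDerivAt_id t).const_mul z).neg.sub ((hasDerivAt_pow 2 t).div_const 2)
      refine this.congr_deriv ?_
      simp
    have := (h1.exp).neg
    refine this.congr_deriv ?_
    rw [w]; ring
  have htend : Tendsto (fun t => -(w z t)) atTop (nhds 0) := by
    rw [← neg_zero]
    apply Tendsto.neg
    have h2 : Tendsto (fun t : ℝ => -(z*t) - t^2/2) atTop atBot := by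
      have h3 : Tendsto (fun t : ℝ => (t + z)^2/2) atTop atTop :=
        ((tendsto_pow_atTop two_ne_zero).comp
          (tendsto_atTop_add_const_right _ z tendsto_id)).atTop_div_const (by norm_num)
      have h4 := tendsto_atBot_add_const_right _ (z^2/2) (tendsto_neg_atTop_atBot.comp h3)
      refine h4.congr fun t => ?_
      simp only [Function.comp]
      ring
    exact Real.tendsto_exp_atBot.comp h2
  have key := integral_Ioi_of_hasDerivAt_of_tendsto' (f := fun t => -(w z t))
    (f' := fun t => (z + t) * w z t) (a := 0) (fun x _ => hderiv x) ?_ htend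
  · have h5 : ∫ t in Ioi (0:ℝ), (z + t) * w z t = 1 := by simpa [w] using key
    rw [M0, M1, ← MeasureTheory.integral_const_mul, ← integral_add ((integrable_w z).const_mul z).integrableOn
      (integrable_tw z).integrableOn, ← h5]
    exact setIntegral_congr_fun measurableSet_Ioi fun t _ => by ring
  · apply Integrable.integrableOn
    have := ((integrable_w z).const_mul z).add (integrable_tw z)
    refine this.congr (Filter.Eventually.of_forall fun t => ?_)
    simp only [Pi.add_apply]
    ring

noncomputable def G0 (x : ℝ) : ℝ := ∫ v in (0:ℝ)..x, Real.exp (-v^2)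

noncomputable def G2 (x : ℝ) : ℝ := ∫ v in (0:ℝ)..x, (1 + v^2) * Real.exp (-v^2)

noncomputable def Efun (a : ℝ) : ℝ := (G0 a - G0 (-a)) - 2*a*Real.exp (-a^2)

noncomputable def Ffun (a : ℝ) : ℝ :=
  (G2 a - G2 (-a)) - a^2 * (G0 a - G0 (-a)) - 2*a*Real.exp (-a^2)

lemma cont_exp_sq : Continuous (fun v : ℝ => Real.exp (-v^2)) := by fun_prop

lemma integrable_exp_sq : Integrable (fun v : ℝ => Real.exp (-v^2)) := by
  have h : Integrable (fun t : ℝ => Real.exp (-(1:ℝ) * t ^ 2)) := integrable_exp_neg_mul_sq (by norm_num)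
  refine h.congr (Filter.Eventually.of_forall fun t => by norm_num)

lemma cont_one_exp_sq : Continuous (fun v : ℝ => (1 + v^2) * Real.exp (-v^2)) := by fun_prop

lemma hasDerivAt_G0 (x : ℝ) : HasDerivAt G0 (Real.exp (-x^2)) x :=
  intervalIntegral.integral_hasDerivAt_right integrable_exp_sq.intervalIntegrable
    (cont_exp_sq.stronglyMeasurableAtFilter _ _) cont_exp_sq.continuousAt

lemma integrable_sq_exp_sq : Integrable (fun v : ℝ => v^2 * Real.exp (-v^2)) := by
  have h := integrable_rpow_mul_exp_neg_mul_sq (b := 1) one_pos (s := 2) (by norm_num)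
  refine h.congr (Filter.Eventually.of_forall fun t => ?_)
  simp only [Real.rpow_natCast]
  norm_num

lemma integrable_one_exp_sq : Integrable (fun v : ℝ => (1 + v^2) * Real.exp (-v^2)) := by
  have := integrable_exp_sq.add integrable_sq_exp_sq
  refine this.congr (Filter.Eventually.of_forall fun t => ?_)
  simp only [Pi.add_apply]
  ring

lemma hasDerivAt_G2 (x : ℝ) : HasDerivAt G2 ((1 + x^2) * Real.exp (-x^2)) x :=
  intervalIntegral.integral_hasDerivAt_right integrable_one_exp_sq.intervalIntegrable
    (cont_one_exp_sq.stronglyMeasurableAtFilter _ _) cont_one_exp_sq.continuousAt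

lemma hasDerivAt_exp_negsq (a : ℝ) : HasDerivAt (fun a : ℝ => Real.exp (-a^2)) (-2*a*Real.exp (-a^2)) a := by
  have h1 : HasDerivAt (fun a : ℝ => -a^2) (-2*a) a := by
    have := (hasDerivAt_pow 2 a).neg
    refine this.congr_deriv ?_
    simp
  convert h1.exp using 1
  ring

lemma hasDerivAt_E (a : ℝ) : HasDerivAt Efun (4*a^2*Real.exp (-a^2)) a := by
  have h1 := (hasDerivAt_G0 a).sub ((hasDerivAt_G0 (-a)).comp a (hasDerivAt_neg a))
  have h2 := ((hasDerivAt_id a).const_mul 2).mul (hasDerivAt_exp_negsq a)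
  have := h1.sub h2
  refine this.congr_deriv ?_
  simp [Function.comp]
  ring

lemma E_pos {a : ℝ} (ha : 0 < a) : 0 < Efun a := by
  have h0 : Efun 0 = 0 := by simp [Efun]
  have : StrictMonoOn Efun (Ici 0) := by
    apply strictMonoOn_of_deriv_pos (convex_Ici 0)
    · refine Continuous.continuousOn ?_
      rw [continuous_iff_continuousAt]
      exact fun x => (hasDerivAt_E x).continuousAt
    · intro x hx
      rw [interior_Ici] at hx
      rw [(hasDerivAt_E x).deriv]
      have hx' : 0 < x := hx
      positivity
  have := this (self_mem_Ici) (le_of_lt ha) ha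
  rwa [h0] at this

lemma hasDerivAt_F (a : ℝ) : HasDerivAt Ffun (-2*a*Efun a) a := by
  have hG0d := (hasDerivAt_G0 a).sub ((hasDerivAt_G0 (-a)).comp a (hasDerivAt_neg a))
  have h1 := (hasDerivAt_G2 a).sub ((hasDerivAt_G2 (-a)).comp a (hasDerivAt_neg a))
  have h2 := ((hasDerivAt_pow 2 a)).mul hG0d
  have h3 := ((hasDerivAt_id a).const_mul 2).mul (hasDerivAt_exp_negsq a)
  have := (h1.sub h2).sub h3
  refine this.congr_deriv ?_
  simp [Function.comp, Efun]
  ring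

lemma F_neg {a : ℝ} (ha : 0 < a) : Ffun a < 0 := by
  have h0 : Ffun 0 = 0 := by simp [Ffun]
  have : StrictAntiOn Ffun (Ici 0) := by
    apply strictAntiOn_of_deriv_neg (convex_Ici 0)
    · refine Continuous.continuousOn ?_
      rw [continuous_iff_continuousAt]
      exact fun x => (hasDerivAt_F x).continuousAt
    · intro x hx
      rw [interior_Ici] at hx
      have hx' : 0 < x := hx
      rw [(hasDerivAt_F x).deriv]
      have hE := E_pos hx'
      nlinarith [mul_pos hx' hE]
  have := this (self_mem_Ici) (le_of_lt ha) ha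
  rwa [h0] at this

lemma pointwise_key {u : ℝ} (hu : 0 < u) :
    ∫ s in Ioo (0:ℝ) u, (1 - s*(u-s)) * Real.exp (-(s^2 + (u-s)^2)/2)
      < u * Real.exp (-u^2/2) := by
  set a := u/2 with ha
  have ha0 : 0 < a := by positivity
  have h1 : ∫ s in Ioo (0:ℝ) u, (1 - s*(u-s)) * Real.exp (-(s^2 + (u-s)^2)/2)
      = ∫ s in (0:ℝ)..u, (1 - s*(u-s)) * Real.exp (-(s^2 + (u-s)^2)/2) := by
    rw [intervalIntegral.integral_of_le hu.le, integral_Ioc_eq_integral_Ioo]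
  have h2 : ∫ s in (0:ℝ)..u, (1 - s*(u-s)) * Real.exp (-(s^2 + (u-s)^2)/2)
      = ∫ v in (-a)..a, (1 - (v+a)*(u-(v+a))) * Real.exp (-((v+a)^2 + (u-(v+a))^2)/2) := by
    rw [intervalIntegral.integral_comp_add_right
      (fun s => (1 - s*(u-s)) * Real.exp (-(s^2 + (u-s)^2)/2)) a]
    norm_num [ha]
  have h3 : ∀ v : ℝ, (1 - (v+a)*(u-(v+a))) * Real.exp (-((v+a)^2 + (u-(v+a))^2)/2)
      = Real.exp (-a^2) * (((1 + v^2) * Real.exp (-v^2)) - a^2 * Real.exp (-v^2)) := by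
    intro v
    have hu2 : u = 2*a := by rw [ha]; ring
    have e2 : -((v+a)^2 + (2*a-(v+a))^2)/2 = -a^2 + -v^2 := by ring
    rw [hu2, e2, Real.exp_add]
    ring
  have h4 : ∫ v in (-a)..a, (1 - (v+a)*(u-(v+a))) * Real.exp (-((v+a)^2 + (u-(v+a))^2)/2)
      = Real.exp (-a^2) * ((∫ v in (-a)..a, (1 + v^2) * Real.exp (-v^2))
          - a^2 * ∫ v in (-a)..a, Real.exp (-v^2)) := by
    calc ∫ v in (-a)..a, (1 - (v+a)*(u-(v+a))) * Real.exp (-((v+a)^2 + (u-(v+a))^2)/2)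
        = ∫ v in (-a)..a, Real.exp (-a^2) * (((1 + v^2) * Real.exp (-v^2)) - a^2 * Real.exp (-v^2)) :=
          intervalIntegral.integral_congr fun v _ => h3 v
      _ = Real.exp (-a^2) * ∫ v in (-a)..a, (((1 + v^2) * Real.exp (-v^2)) - a^2 * Real.exp (-v^2)) :=
          intervalIntegral.integral_const_mul _ _
      _ = Real.exp (-a^2) * ((∫ v in (-a)..a, (1 + v^2) * Real.exp (-v^2))
          - a^2 * ∫ v in (-a)..a, Real.exp (-v^2)) := by
          rw [intervalIntegral.integral_sub (integrable_one_exp_sq.intervalIntegrable)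
            (integrable_exp_sq.intervalIntegrable.const_mul _),
            intervalIntegral.integral_const_mul]
  have hG2 : (∫ v in (-a)..a, (1 + v^2) * Real.exp (-v^2)) = G2 a - G2 (-a) := by
    rw [G2, G2, ← intervalIntegral.integral_interval_sub_left
      (integrable_one_exp_sq.intervalIntegrable) (integrable_one_exp_sq.intervalIntegrable)]
  have hG0 : (∫ v in (-a)..a, Real.exp (-v^2)) = G0 a - G0 (-a) := by
    rw [G0, G0, ← intervalIntegral.integral_interval_sub_left
      (integrable_exp_sq.intervalIntegrable) (integrable_exp_sq.intervalIntegrable)]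
  have hF := F_neg ha0
  rw [h1, h2, h4, hG2, hG0]
  have hru : u * Real.exp (-u^2/2) = Real.exp (-a^2) * (2*a*Real.exp (-a^2)) := by
    have h5 : u = 2*a := by rw [ha]; ring
    rw [h5, show -(2*a)^2/2 = -a^2 + -a^2 by ring, Real.exp_add]
    ring
  rw [hru]
  apply mul_lt_mul_of_pos_left _ (Real.exp_pos _)
  unfold Ffun at hF
  linarith

noncomputable def Lm : ℝ →L[ℝ] ℝ →L[ℝ] ℝ := ContinuousLinearMap.mul ℝ ℝ

noncomputable def Af (z : ℝ) : ℝ → ℝ := (Ioi (0:ℝ)).indicator (w z)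

noncomputable def Bf (z : ℝ) : ℝ → ℝ := (Ioi (0:ℝ)).indicator (fun s => s * w z s)

lemma integrable_Af (z : ℝ) : Integrable (Af z) := (integrable_w z).indicator measurableSet_Ioi

lemma integrable_Bf (z : ℝ) : Integrable (Bf z) := (integrable_tw z).indicator measurableSet_Ioi

lemma integral_Af (z : ℝ) : ∫ x, Af z x = M0 z := integral_indicator measurableSet_Ioi

lemma integral_Bf (z : ℝ) : ∫ x, Bf z x = M1 z := integral_indicator measurableSet_Ioi

noncomputable def e2 (u s : ℝ) : ℝ := Real.exp (-(s^2 + (u-s)^2)/2)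

lemma e2_cont (u : ℝ) : Continuous (e2 u) := by unfold e2; fun_prop

lemma w_mul_w (z u s : ℝ) : w z s * w z (u - s) = Real.exp (-(z*u)) * e2 u s := by
  rw [w, w, e2, ← Real.exp_add, ← Real.exp_add]
  congr 1
  ring

lemma AconvA (z u : ℝ) : (Af z ⋆[Lm] Af z) u
    = Real.exp (-(z*u)) * ∫ s in Ioo (0:ℝ) u, e2 u s := by
  rw [convolution_def]
  have h : ∀ s : ℝ, Lm (Af z s) (Af z (u - s))
      = (Ioo (0:ℝ) u).indicator (fun s => Real.exp (-(z*u)) * e2 u s) s := by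
    intro s
    simp only [Lm, ContinuousLinearMap.mul_apply', Af]
    by_cases hs : s ∈ Ioi (0:ℝ)
    · by_cases hus : u - s ∈ Ioi (0:ℝ)
      · rw [indicator_of_mem hs, indicator_of_mem hus,
          indicator_of_mem (show s ∈ Ioo 0 u by constructor <;> [exact hs; linarith [hus.out]])]
        exact w_mul_w z u s
      · rw [indicator_of_notMem hus, mul_zero,
          indicator_of_notMem (fun hm : s ∈ Ioo 0 u => hus (by simp [mem_Ioi]; linarith [hm.2]))]
    · rw [indicator_of_notMem hs, zero_mul,
        indicator_of_notMem (fun hm : s ∈ Ioo 0 u => hs hm.1)]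
  rw [integral_congr_ae (Filter.Eventually.of_forall h), MeasureTheory.integral_indicator measurableSet_Ioo,
    MeasureTheory.integral_const_mul]

lemma BconvB (z u : ℝ) : (Bf z ⋆[Lm] Bf z) u
    = Real.exp (-(z*u)) * ∫ s in Ioo (0:ℝ) u, (s * (u - s)) * e2 u s := by
  rw [convolution_def]
  have h : ∀ s : ℝ, Lm (Bf z s) (Bf z (u - s))
      = (Ioo (0:ℝ) u).indicator (fun s => Real.exp (-(z*u)) * ((s * (u-s)) * e2 u s)) s := by
    intro s
    simp only [Lm, ContinuousLinearMap.mul_apply', Bf]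
    by_cases hs : s ∈ Ioi (0:ℝ)
    · by_cases hus : u - s ∈ Ioi (0:ℝ)
      · rw [indicator_of_mem hs, indicator_of_mem hus,
          indicator_of_mem (show s ∈ Ioo 0 u by constructor <;> [exact hs; linarith [hus.out]])]
        rw [show s * w z s * ((u - s) * w z (u - s)) = (s * (u-s)) * (w z s * w z (u-s)) by ring,
          w_mul_w z u s]
        ring
      · rw [indicator_of_notMem hus, mul_zero,
          indicator_of_notMem (fun hm : s ∈ Ioo 0 u => hus (by simp [mem_Ioi]; linarith [hm.2]))]
    · rw [indicator_of_notMem hs, zero_mul,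
        indicator_of_notMem (fun hm : s ∈ Ioo 0 u => hs hm.1)]
  rw [integral_congr_ae (Filter.Eventually.of_forall h), MeasureTheory.integral_indicator measurableSet_Ioo,
    MeasureTheory.integral_const_mul]

lemma key_ineq (z : ℝ) : M0 z ^ 2 < M1 z + M1 z ^ 2 := by
  have hAA := (integrable_Af z).integrable_convolution Lm (integrable_Af z)
  have hBB := (integrable_Bf z).integrable_convolution Lm (integrable_Bf z)
  have hd : Integrable (fun u => (Bf z ⋆[Lm] Bf z) u - (Af z ⋆[Lm] Af z) u) := hBB.sub hAA
  have hInt : Integrable (fun u => Bf z u + ((Bf z ⋆[Lm] Bf z) u - (Af z ⋆[Lm] Af z) u)) :=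
    (integrable_Bf z).add hd
  have hval : ∫ u, (Bf z u + ((Bf z ⋆[Lm] Bf z) u - (Af z ⋆[Lm] Af z) u))
      = M1 z + (M1 z ^ 2 - M0 z ^ 2) := by
    rw [integral_add (integrable_Bf z) hd, integral_sub hBB hAA,
      integral_convolution Lm (integrable_Bf z) (integrable_Bf z),
      integral_convolution Lm (integrable_Af z) (integrable_Af z),
      integral_Af, integral_Bf]
    simp [Lm, ContinuousLinearMap.mul_apply']
    ring
  have hgpos : ∀ u : ℝ, 0 < u →
      0 < Bf z u + ((Bf z ⋆[Lm] Bf z) u - (Af z ⋆[Lm] Af z) u) := by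
    intro u hu
    have hIw : IntegrableOn (e2 u) (Ioo 0 u) :=
      ((e2_cont u).integrableOn_Icc).mono_set Ioo_subset_Icc_self
    have hIsw : IntegrableOn (fun s => (s * (u - s)) * e2 u s) (Ioo 0 u) :=
      (((continuous_id.mul (continuous_const.sub continuous_id)).mul
        (e2_cont u)).integrableOn_Icc).mono_set Ioo_subset_Icc_self
    have hsub : (∫ s in Ioo (0:ℝ) u, e2 u s) - (∫ s in Ioo (0:ℝ) u, (s * (u - s)) * e2 u s)
        = (∫ s in Ioo (0:ℝ) u, (1 - s*(u-s)) * e2 u s) := by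
      rw [← integral_sub hIw hIsw]
      exact setIntegral_congr_fun measurableSet_Ioo fun s _ => by ring
    have hpk := pointwise_key hu
    have hBu : Bf z u = Real.exp (-(z*u)) * (u * Real.exp (-u^2/2)) := by
      rw [Bf, indicator_of_mem (show u ∈ Ioi 0 from hu), w,
        show -(z*u) - u^2/2 = -(z*u) + -u^2/2 by ring, Real.exp_add]
      ring
    rw [AconvA, BconvB, hBu]
    have heq : Real.exp (-(z*u)) * (u * Real.exp (-u^2/2)) +
        (Real.exp (-(z*u)) * (∫ s in Ioo (0:ℝ) u, (s * (u - s)) * e2 u s)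
          - Real.exp (-(z*u)) * (∫ s in Ioo (0:ℝ) u, e2 u s))
        = Real.exp (-(z*u)) * ((u * Real.exp (-u^2/2)) -
            ((∫ s in Ioo (0:ℝ) u, e2 u s) - (∫ s in Ioo (0:ℝ) u, (s * (u - s)) * e2 u s))) := by
      ring
    rw [heq, hsub]
    apply mul_pos (Real.exp_pos _)
    have h5 : ∫ s in Ioo (0:ℝ) u, (1 - s*(u-s)) * e2 u s
        = ∫ s in Ioo (0:ℝ) u, (1 - s*(u-s)) * Real.exp (-(s^2 + (u-s)^2)/2) := rfl
    rw [h5]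
    linarith
  have hgzero : ∀ u : ℝ, u ≤ 0 →
      Bf z u + ((Bf z ⋆[Lm] Bf z) u - (Af z ⋆[Lm] Af z) u) = 0 := by
    intro u hu
    have hIoo : Ioo (0:ℝ) u = ∅ := Ioo_eq_empty (by intro h; linarith)
    rw [AconvA, BconvB, hIoo, setIntegral_empty, setIntegral_empty,
      Bf, indicator_of_notMem (by simpa using hu)]
    ring
  have hpos : 0 < ∫ u, (Bf z u + ((Bf z ⋆[Lm] Bf z) u - (Af z ⋆[Lm] Af z) u)) := by
    rw [integral_pos_iff_support_of_nonneg_ae ?_ hInt]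
    · apply lt_of_lt_of_le _ (measure_mono (show Ioi (0:ℝ) ⊆ Function.support
        (fun u => Bf z u + ((Bf z ⋆[Lm] Bf z) u - (Af z ⋆[Lm] Af z) u)) from
        fun u hu => (hgpos u hu).ne'))
      rw [Real.volume_Ioi]
      simp
    · filter_upwards with u
      rcases le_or_gt u 0 with h | h
      · exact (hgzero u h).ge
      · exact (hgpos u h).le
  rw [hval] at hpos
  linarith

noncomputable def millsR (t : ℝ) : ℝ := phi t / Phi t

noncomputable def Dfun (z : ℝ) : ℝ := millsR (-z) ^ 2 - z * millsR (-z)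

noncomputable def lam (z : ℝ) : ℝ := phi z / Phi (-z)

lemma lam_pos (z : ℝ) : 0 < lam z := div_pos (phi_pos z) (Phi_pos (-z))

lemma millsR_neg (z : ℝ) : millsR (-z) = lam z := by rw [millsR, lam, phi_even]

lemma lam_mul_M0 (z : ℝ) : lam z * M0 z = 1 := by
  rw [lam, Phi_neg]
  field_simp [(phi_pos z).ne', (M0_pos z).ne']

lemma hasDerivAt_lam (z : ℝ) : HasDerivAt lam (lam z ^ 2 - z * lam z) z := by
  have hG : HasDerivAt (fun z : ℝ => Phi (-z)) (-(phi z)) z := by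
    have := (hasDerivAt_Phi (-z)).comp z (hasDerivAt_neg z)
    refine this.congr_deriv ?_
    rw [phi_even]
    ring
  have h := (hasDerivAt_phi z).div hG (Phi_pos (-z)).ne'
  refine h.congr_deriv ?_
  rw [lam]
  field_simp [(Phi_pos (-z)).ne']
  ring

/-- `D` is strictly increasing. -/
theorem Dfun_strictMono : StrictMono Dfun := by
  have hD : ∀ z : ℝ, HasDerivAt Dfun
      (2 * lam z * (lam z ^ 2 - z * lam z) - (lam z + z * (lam z ^ 2 - z * lam z))) z := by
    intro z
    have h1 := ((hasDerivAt_lam z).mul (hasDerivAt_lam z)).sub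
      ((hasDerivAt_id z).mul (hasDerivAt_lam z))
    have hDe : Dfun = fun z => lam z * lam z - z * lam z := by
      funext x
      rw [Dfun, millsR_neg]
      ring
    rw [hDe]
    refine h1.congr_deriv ?_
    simp
    ring
  have hpos : ∀ z : ℝ, 0 < 2 * lam z * (lam z ^ 2 - z * lam z)
      - (lam z + z * (lam z ^ 2 - z * lam z)) := by
    intro z
    set L := lam z
    set M := M0 z
    set N := M1 z
    have hLM : L * M = 1 := lam_mul_M0 z
    have hid : z * M + N = 1 := M_identity z
    have hkey : M ^ 2 < N + N ^ 2 := key_ineq z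
    have hL : 0 < L := lam_pos z
    have halg : 2 * L * (L ^ 2 - z * L) - (L + z * (L ^ 2 - z * L))
        = L^3 * ((N + N^2) - M^2) := by
      linear_combination (3*z*L^2 + (L - z^2*L)*(L*M+1)) * hLM - L^3*(2 + N - z*M) * hid
    rw [halg]
    have : 0 < (N + N^2) - M^2 := by linarith
    positivity
  apply strictMono_of_deriv_pos
  intro z
  rw [(hD z).deriv]
  exact hpos z
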